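/- arXiv:1203.0905 — 2 statements merged into one kernel-verified Lean document; each statement's English description precedes it below -/
import Mathlib

section
/- (Result 1 of the paper.) Given six lines with Plücker matrices L₁,…,L₆ and a plane π, the six intersection points L₁π,…,L₆π lie on a common conic contained in π if and only if D(π, a₁, a₂, a₃, a₄) := det(ν₂(L₁π),…,ν₂(L₆π), ν₂(a₁),…,ν₂(a₄)) = 0 for all a₁,…,a₄ ∈ ℂ^4. -/
set_option linter.unreachableTactic false
set_option linter.unusedTactic false


open Matrix

/-- The degree-2 Veronese map on R⁴. -/
def nu2four {R : Type*} [CommRing R] (x : Fin 4 → R) : Fin 10 → R :=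
  ![x 0 ^ 2, x 0 * x 1, x 0 * x 2, x 0 * x 3, x 1 ^ 2,
    x 1 * x 2, x 1 * x 3, x 2 ^ 2, x 2 * x 3, x 3 ^ 2]

namespace Stmt12

private lemma fsucc23 : (Fin.succ (2 : Fin 3)) = (3 : Fin 4) := rfl

def cQ (M : Matrix (Fin 4) (Fin 4) ℂ) : Fin 10 → ℂ :=
  ![M 0 0, M 0 1 + M 1 0, M 0 2 + M 2 0, M 0 3 + M 3 0, M 1 1,
    M 1 2 + M 2 1, M 1 3 + M 3 1, M 2 2, M 2 3 + M 3 2, M 3 3]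

lemma cQ_id (M : Matrix (Fin 4) (Fin 4) ℂ) (x : Fin 4 → ℂ) :
    cQ M ⬝ᵥ nu2four x = x ⬝ᵥ M.mulVec x := by
  simp [cQ, nu2four, dotProduct, Matrix.mulVec, Fin.sum_univ_succ, fsucc23]
  ring

noncomputable abbrev VSpan : Submodule ℂ (Fin 10 → ℂ) :=
  Submodule.span ℂ (Set.range (nu2four (R := ℂ)))

private lemma mem_vspan (y : Fin 4 → ℂ) : nu2four y ∈ VSpan :=
  Submodule.subset_span ⟨y, rfl⟩

private lemma single_mem (r : Fin 10) : Pi.single r (1:ℂ) ∈ VSpan := by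
  have key : ∀ u v w : Fin 4 → ℂ, ∀ z : Fin 10 → ℂ,
      z = nu2four u - nu2four v - nu2four w → z ∈ VSpan := by
    intro u v w z hz
    rw [hz]
    exact Submodule.sub_mem _ (Submodule.sub_mem _ (mem_vspan u) (mem_vspan v)) (mem_vspan w)
  fin_cases r
  · have h : Pi.single (0 : Fin 10) (1:ℂ) = nu2four (![1,0,0,0] : Fin 4 → ℂ) := by
      funext s; fin_cases s <;> norm_num [nu2four, Pi.single_apply, Fin.ext_iff] <;> simp [Matrix.cons_val]
    show Pi.single (0 : Fin 10) (1:ℂ) ∈ VSpan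
    rw [h]; exact mem_vspan _
  · show Pi.single (1 : Fin 10) (1:ℂ) ∈ VSpan
    exact key ![1,1,0,0] ![1,0,0,0] ![0,1,0,0] _ (by
      funext s; fin_cases s <;> norm_num [nu2four, Pi.single_apply, Fin.ext_iff] <;> simp [Matrix.cons_val])
  · show Pi.single (2 : Fin 10) (1:ℂ) ∈ VSpan
    exact key ![1,0,1,0] ![1,0,0,0] ![0,0,1,0] _ (by
      funext s; fin_cases s <;> norm_num [nu2four, Pi.single_apply, Fin.ext_iff] <;> simp [Matrix.cons_val])
  · show Pi.single (3 : Fin 10) (1:ℂ) ∈ VSpan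
    exact key ![1,0,0,1] ![1,0,0,0] ![0,0,0,1] _ (by
      funext s; fin_cases s <;> norm_num [nu2four, Pi.single_apply, Fin.ext_iff] <;> simp [Matrix.cons_val])
  · have h : Pi.single (4 : Fin 10) (1:ℂ) = nu2four (![0,1,0,0] : Fin 4 → ℂ) := by
      funext s; fin_cases s <;> norm_num [nu2four, Pi.single_apply, Fin.ext_iff] <;> simp [Matrix.cons_val]
    show Pi.single (4 : Fin 10) (1:ℂ) ∈ VSpan
    rw [h]; exact mem_vspan _
  · show Pi.single (5 : Fin 10) (1:ℂ) ∈ VSpan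
    exact key ![0,1,1,0] ![0,1,0,0] ![0,0,1,0] _ (by
      funext s; fin_cases s <;> norm_num [nu2four, Pi.single_apply, Fin.ext_iff] <;> simp [Matrix.cons_val])
  · show Pi.single (6 : Fin 10) (1:ℂ) ∈ VSpan
    exact key ![0,1,0,1] ![0,1,0,0] ![0,0,0,1] _ (by
      funext s; fin_cases s <;> norm_num [nu2four, Pi.single_apply, Fin.ext_iff] <;> simp [Matrix.cons_val])
  · have h : Pi.single (7 : Fin 10) (1:ℂ) = nu2four (![0,0,1,0] : Fin 4 → ℂ) := by
      funext s; fin_cases s <;> norm_num [nu2four, Pi.single_apply, Fin.ext_iff] <;> simp [Matrix.cons_val]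
    show Pi.single (7 : Fin 10) (1:ℂ) ∈ VSpan
    rw [h]; exact mem_vspan _
  · show Pi.single (8 : Fin 10) (1:ℂ) ∈ VSpan
    exact key ![0,0,1,1] ![0,0,1,0] ![0,0,0,1] _ (by
      funext s; fin_cases s <;> norm_num [nu2four, Pi.single_apply, Fin.ext_iff] <;> simp [Matrix.cons_val])
  · have h : Pi.single (9 : Fin 10) (1:ℂ) = nu2four (![0,0,0,1] : Fin 4 → ℂ) := by
      funext s; fin_cases s <;> norm_num [nu2four, Pi.single_apply, Fin.ext_iff] <;> simp [Matrix.cons_val]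
    show Pi.single (9 : Fin 10) (1:ℂ) ∈ VSpan
    rw [h]; exact mem_vspan _

lemma span_nu2four : VSpan = ⊤ := by
  rw [eq_top_iff, ← (Pi.basisFun ℂ (Fin 10)).span_eq, Submodule.span_le]
  rintro - ⟨r, rfl⟩
  have pb : (Pi.basisFun ℂ (Fin 10)) r = Pi.single r (1:ℂ) := by
    simp [Pi.basisFun_apply]
  rw [pb]
  exact single_mem r

lemma eq_zero_of_dot_nu2 (d : Fin 10 → ℂ) (h : ∀ x : Fin 4 → ℂ, d ⬝ᵥ nu2four x = 0) :
    d = 0 := by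
  let φ : (Fin 10 → ℂ) →ₗ[ℂ] ℂ :=
    { toFun := fun y => d ⬝ᵥ y
      map_add' := fun y z => dotProduct_add d y z
      map_smul' := fun t y => by simp }
  have hker : LinearMap.ker φ = ⊤ := by
    rw [← top_le_iff, ← span_nu2four, Submodule.span_le]
    rintro - ⟨x, rfl⟩
    exact h x
  have hφ : ∀ y, φ y = 0 := fun y => LinearMap.ker_eq_top.mp hker ▸ rfl
  funext r
  have := hφ (Pi.single r 1)
  simpa [φ] using this


lemma dot_nu2_ext {d₁ d₂ : Fin 10 → ℂ}
    (h : ∀ x : Fin 4 → ℂ, d₁ ⬝ᵥ nu2four x = d₂ ⬝ᵥ nu2four x) : d₁ = d₂ := by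
  have := eq_zero_of_dot_nu2 (d₁ - d₂) (fun x => by rw [sub_dotProduct, h x]; ring)
  exact sub_eq_zero.mp this

lemma cQvv_dot (π l x : Fin 4 → ℂ) :
    cQ (vecMulVec π l) ⬝ᵥ nu2four x = (π ⬝ᵥ x) * (l ⬝ᵥ x) := by
  rw [cQ_id]
  simp only [vecMulVec_apply, dotProduct, Matrix.mulVec, Finset.mul_sum, Finset.sum_mul]
  rw [Finset.sum_comm]
  congr 1; ext i; congr 1; ext j; ring

noncomputable def Flin (π : Fin 4 → ℂ) : (Fin 4 → ℂ) →ₗ[ℂ] (Fin 10 → ℂ) where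
  toFun l := cQ (vecMulVec π l)
  map_add' l l' := by
    apply dot_nu2_ext
    intro x
    rw [add_dotProduct, cQvv_dot, cQvv_dot, cQvv_dot, add_dotProduct]
    ring
  map_smul' t l := by
    apply dot_nu2_ext
    intro x
    rw [RingHom.id_apply, smul_dotProduct, cQvv_dot, cQvv_dot, smul_dotProduct,
      smul_eq_mul, smul_eq_mul]
    ring

lemma Flin_dot (π l x : Fin 4 → ℂ) :
    Flin π l ⬝ᵥ nu2four x = (π ⬝ᵥ x) * (l ⬝ᵥ x) := cQvv_dot π l x

lemma Flin_inj (π : Fin 4 → ℂ) (hπ : π ≠ 0) : Function.Injective (Flin π) := by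
  rw [injective_iff_map_eq_zero]
  intro l hl
  have h : ∀ x : Fin 4 → ℂ, (π ⬝ᵥ x) * (l ⬝ᵥ x) = 0 := by
    intro x
    rw [← Flin_dot π l x, hl]
    simp
  obtain ⟨k, hk⟩ := Function.ne_iff.mp hπ
  simp only [Pi.zero_apply] at hk
  have hlk : l k = 0 := by
    have := h (Pi.single k 1)
    simp [dotProduct_single] at this
    rcases this with h' | h'
    · exact absurd h' hk
    · exact h'
  funext j
  show l j = 0
  by_cases hjk : j = k
  · rw [hjk]; exact hlk
  by_contra hlj
  have h1 := h (Pi.single k 1 + Pi.single j 1)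
  have h2 := h (Pi.single k 1 - Pi.single j 1)
  simp [dotProduct_add, dotProduct_sub, dotProduct_single, hlk] at h1 h2
  rcases h1 with h1 | h1
  · rcases h2 with h2 | h2
    · exact hk (by linear_combination (h1 + h2) / 2)
    · exact hlj (by linear_combination h2)
  · exact hlj (by linear_combination h1)

noncomputable def Qc (c : Fin 10 → ℂ) : Matrix (Fin 4) (Fin 4) ℂ :=
  !![c 0, c 1/2, c 2/2, c 3/2;
     c 1/2, c 4, c 5/2, c 6/2;
     c 2/2, c 5/2, c 7, c 8/2;
     c 3/2, c 6/2, c 8/2, c 9]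

lemma Qc_symm (c : Fin 10 → ℂ) : (Qc c)ᵀ = Qc c := by
  ext i j
  fin_cases i <;> fin_cases j <;> rfl

lemma cQ_Qc (c : Fin 10 → ℂ) : cQ (Qc c) = c := by
  funext r
  fin_cases r <;> (simp [cQ, Qc]; try ring_nf) <;> rfl

lemma Qc_id (c : Fin 10 → ℂ) (x : Fin 4 → ℂ) :
    x ⬝ᵥ (Qc c).mulVec x = c ⬝ᵥ nu2four x := by
  rw [← cQ_id, cQ_Qc]

lemma range_Flin_iff (π : Fin 4 → ℂ) (hπ : π ≠ 0) (c : Fin 10 → ℂ) :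
    c ∈ LinearMap.range (Flin π) ↔ ∀ x : Fin 4 → ℂ, π ⬝ᵥ x = 0 → c ⬝ᵥ nu2four x = 0 := by
  constructor
  · rintro ⟨l, rfl⟩ x hx
    rw [Flin_dot, hx, zero_mul]
  · intro h
    obtain ⟨k, hk⟩ := Function.ne_iff.mp hπ
    simp only [Pi.zero_apply] at hk
    set u : Fin 4 → ℂ := (π k)⁻¹ • (Pi.single k 1 : Fin 4 → ℂ) with hu
    have hπu : π ⬝ᵥ u = 1 := by
      rw [hu]
      rw [dotProduct_smul, dotProduct_single]
      field_simp
      simp [hk]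
    set Q := Qc c with hQ
    refine ⟨u ᵥ* Q + Q *ᵥ u - (u ⬝ᵥ Q *ᵥ u) • π, ?_⟩
    apply dot_nu2_ext
    intro x
    rw [Flin_dot, ← Qc_id, ← hQ]
    set α := π ⬝ᵥ x with hα
    have hplane : π ⬝ᵥ (x - α • u) = 0 := by
      rw [dotProduct_sub, dotProduct_smul, hπu, smul_eq_mul, mul_one, sub_self]
    have hx' : (x - α • u) ⬝ᵥ Q *ᵥ (x - α • u) = 0 := by
      rw [Qc_id]
      exact h _ hplane
    have expand : (x - α • u) ⬝ᵥ Q *ᵥ (x - α • u)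
        = x ⬝ᵥ Q *ᵥ x - α * (u ⬝ᵥ Q *ᵥ x) - α * (x ⬝ᵥ Q *ᵥ u) + α * α * (u ⬝ᵥ Q *ᵥ u) := by
      rw [Matrix.mulVec_sub, Matrix.mulVec_smul]
      simp only [sub_dotProduct, dotProduct_sub, dotProduct_smul, smul_dotProduct,
        smul_eq_mul]
      ring
    rw [expand] at hx'
    have hl : (u ᵥ* Q + Q *ᵥ u - (u ⬝ᵥ Q *ᵥ u) • π) ⬝ᵥ x
        = u ⬝ᵥ Q *ᵥ x + x ⬝ᵥ Q *ᵥ u - (u ⬝ᵥ Q *ᵥ u) * α := by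
      rw [sub_dotProduct, add_dotProduct, smul_dotProduct, smul_eq_mul,
        ← Matrix.dotProduct_mulVec, dotProduct_comm (Q *ᵥ u) x, hα]
    rw [hl]
    linear_combination -hx'

noncomputable abbrev perpKer (v : Fin 6 → Fin 10 → ℂ) :
    Submodule ℂ (Fin 10 → ℂ) :=
  LinearMap.ker (Matrix.of v).mulVecLin

lemma mem_perpKer_iff (v : Fin 6 → Fin 10 → ℂ) (d : Fin 10 → ℂ) :
    d ∈ perpKer v ↔ ∀ i, v i ⬝ᵥ d = 0 := by
  rw [LinearMap.mem_ker]
  constructor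
  · intro hd i
    have := congrFun hd i
    simpa [Matrix.mulVecLin_apply, Matrix.mulVec] using this
  · intro hd
    funext i
    simpa [Matrix.mulVecLin_apply, Matrix.mulVec] using hd i

lemma finrank_perpKer (v : Fin 6 → Fin 10 → ℂ) :
    Module.finrank ℂ (perpKer v) = 10 - Module.finrank ℂ (Submodule.span ℂ (Set.range v)) := by
  have h1 := LinearMap.finrank_range_add_finrank_ker (Matrix.of v).mulVecLin
  have htot : Module.finrank ℂ (Fin 10 → ℂ) = 10 := by
    simp [Module.finrank_fintype_fun_eq_card]
  rw [htot] at h1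
  have h2 : Module.finrank ℂ (LinearMap.range (Matrix.of v).mulVecLin)
      = Module.finrank ℂ (Submodule.span ℂ (Set.range v)) := by
    have e1 : (Matrix.of v).rank = Module.finrank ℂ (LinearMap.range (Matrix.of v).mulVecLin) := rfl
    have e2 := Matrix.rank_transpose (Matrix.of v)
    have e3 := Matrix.rank_eq_finrank_span_cols (Matrix.of v)ᵀ
    change _ = Module.finrank ℂ (Submodule.span ℂ (Set.range (Matrix.of v))) at e3
    rw [← e1, ← e2, e3]
    rfl
  rw [h2] at h1
  show Module.finrank ℂ (LinearMap.ker (Matrix.of v).mulVecLin) = _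
  omega
lemma finrank_span_six_le (v : Fin 6 → Fin 10 → ℂ) :
    Module.finrank ℂ (Submodule.span ℂ (Set.range v)) ≤ 6 := by
  have e2 := Matrix.rank_transpose (Matrix.of v)
  have e3 := Matrix.rank_eq_finrank_span_cols (Matrix.of v)ᵀ
  change _ = Module.finrank ℂ (Submodule.span ℂ (Set.range (Matrix.of v))) at e3
  have e4 : (Matrix.of v).rank ≤ 6 := by
    have := Matrix.rank_le_card_height (Matrix.of v)
    simpa using this
  have : Module.finrank ℂ (Submodule.span ℂ (Set.range (Matrix.of v))) ≤ 6 := by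
    rw [← e3, e2]; exact e4
  exact this

lemma key (π : Fin 4 → ℂ) (hπ : π ≠ 0) (p : Fin 6 → Fin 4 → ℂ)
    (hp : ∀ i, π ⬝ᵥ p i = 0) :
    (∃ c : Fin 10 → ℂ, (∀ i, c ⬝ᵥ nu2four (p i) = 0) ∧
      ∃ x, π ⬝ᵥ x = 0 ∧ c ⬝ᵥ nu2four x ≠ 0)
    ↔ ¬ LinearIndependent ℂ (fun i => nu2four (p i)) := by
  set v : Fin 6 → Fin 10 → ℂ := fun i => nu2four (p i) with hv
  have hAK : LinearMap.range (Flin π) ≤ perpKer v := by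
    intro c hc
    rw [mem_perpKer_iff]
    intro i
    rw [dotProduct_comm]
    exact (range_Flin_iff π hπ c).mp hc (p i) (hp i)
  have hA : Module.finrank ℂ (LinearMap.range (Flin π)) = 4 := by
    rw [LinearMap.finrank_range_of_inj (Flin_inj π hπ)]
    simp [Module.finrank_fintype_fun_eq_card]
  constructor
  · rintro ⟨c, hcv, x₀, hx₀, hcx⟩ hind
    have h6 : Module.finrank ℂ (Submodule.span ℂ (Set.range v)) = 6 := by
      rw [finrank_span_eq_card hind]; simp
    have hK : Module.finrank ℂ (perpKer v) = 4 := by rw [finrank_perpKer, h6]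
    have hAeqK : LinearMap.range (Flin π) = perpKer v :=
      Submodule.eq_of_le_of_finrank_le hAK (by rw [hK, hA])
    have hcK : c ∈ perpKer v :=
      (mem_perpKer_iff v c).mpr (fun i => by rw [dotProduct_comm]; exact hcv i)
    rw [← hAeqK] at hcK
    exact hcx ((range_Flin_iff π hπ c).mp hcK x₀ hx₀)
  · intro hdep
    have h5 : Module.finrank ℂ (Submodule.span ℂ (Set.range v)) ≤ 5 := by
      have hne := mt linearIndependent_iff_card_eq_finrank_span.mpr hdep
      have hle := finrank_span_six_le v
      rw [Set.finrank] at hne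
      simp only [Fintype.card_fin] at hne
      omega
    have hK5 : 5 ≤ Module.finrank ℂ (perpKer v) := by
      rw [finrank_perpKer]; omega
    have hlt : LinearMap.range (Flin π) < perpKer v := by
      refine lt_of_le_of_ne hAK (fun he => ?_)
      rw [← he, hA] at hK5; omega
    obtain ⟨c, hcK, hcA⟩ := SetLike.exists_of_lt hlt
    refine ⟨c, fun i => by rw [dotProduct_comm]; exact (mem_perpKer_iff v c).mp hcK i, ?_⟩
    by_contra hno
    push_neg at hno
    exact hcA ((range_Flin_iff π hπ c).mpr hno)

lemma det_zero_iff (u : Fin 10 → Fin 10 → ℂ) :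
    (Matrix.of fun r c : Fin 10 => u c r).det = 0 ↔ ¬ LinearIndependent ℂ u := by
  rw [← Matrix.exists_mulVec_eq_zero_iff, Fintype.not_linearIndependent_iff]
  have hmv : ∀ w : Fin 10 → ℂ, (Matrix.of fun r c : Fin 10 => u c r) *ᵥ w = ∑ i, w i • u i := by
    intro w; funext r
    rw [Finset.sum_apply]
    simp [Matrix.mulVec, dotProduct, mul_comm]
  constructor
  · rintro ⟨w, hw0, hmw⟩
    refine ⟨w, by rw [← hmv]; exact hmw, ?_⟩
    obtain ⟨i, hi⟩ := Function.ne_iff.mp hw0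
    exact ⟨i, hi⟩
  · rintro ⟨g, hg, i, hgi⟩
    exact ⟨g, fun h0 => hgi (by rw [h0]; rfl), by rw [hmv]; exact hg⟩

lemma exists_snoc {n : ℕ} (hn : n < 10) (u : Fin n → Fin 10 → ℂ)
    (h : LinearIndependent ℂ u) :
    ∃ x : Fin 4 → ℂ, LinearIndependent ℂ (Fin.snoc u (nu2four x) : Fin (n+1) → Fin 10 → ℂ) := by
  have hspan : Submodule.span ℂ (Set.range u) ≠ ⊤ := by
    intro he
    have h1 : Module.finrank ℂ (Submodule.span ℂ (Set.range u)) = n := by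
      rw [finrank_span_eq_card h]; simp
    rw [he, finrank_top] at h1
    simp [Module.finrank_fintype_fun_eq_card] at h1
    omega
  have hex : ∃ x : Fin 4 → ℂ, nu2four x ∉ Submodule.span ℂ (Set.range u) := by
    by_contra hno
    push_neg at hno
    apply hspan
    rw [← top_le_iff, ← span_nu2four, Submodule.span_le]
    rintro - ⟨x, rfl⟩
    exact hno x
  obtain ⟨x, hx⟩ := hex
  exact ⟨x, linearIndependent_fin_snoc.mpr ⟨h, hx⟩⟩

lemma exists_append (v : Fin 6 → Fin 10 → ℂ) (h : LinearIndependent ℂ v) :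
    ∃ a : Fin 4 → Fin 4 → ℂ,
      LinearIndependent ℂ (Fin.append v (fun j => nu2four (a j)) : Fin 10 → Fin 10 → ℂ) := by
  obtain ⟨x0, h0⟩ := exists_snoc (by norm_num) v h
  obtain ⟨x1, h1⟩ := exists_snoc (by norm_num) _ h0
  obtain ⟨x2, h2⟩ := exists_snoc (by norm_num) _ h1
  obtain ⟨x3, h3⟩ := exists_snoc (by norm_num) _ h2
  refine ⟨![x0, x1, x2, x3], ?_⟩
  have heq : (Fin.append v (fun j => nu2four (![x0, x1, x2, x3] j)) : Fin 10 → Fin 10 → ℂ)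
      = Fin.snoc (Fin.snoc (Fin.snoc (Fin.snoc v (nu2four x0)) (nu2four x1)) (nu2four x2))
          (nu2four x3) := by
    funext i
    fin_cases i <;> rfl
  rw [heq]
  exact h3

end Stmt12

/-- The plane π meets the six lines Lᵢ in points of a conic contained in π:
there is a symmetric quadratic form, not identically zero on the plane π,
vanishing at the six intersection points Lᵢπ. -/
def MeetsInConic (L : Fin 6 → Matrix (Fin 4) (Fin 4) ℂ) (π : Fin 4 → ℂ) : Prop :=
  ∃ Q : Matrix (Fin 4) (Fin 4) ℂ, Qᵀ = Q ∧
    (¬ ∀ x : Fin 4 → ℂ, π ⬝ᵥ x = 0 → x ⬝ᵥ Q.mulVec x = 0) ∧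
    ∀ i : Fin 6, ((L i).mulVec π) ⬝ᵥ Q.mulVec ((L i).mulVec π) = 0

open Stmt12

/-- (Result 1.)  The six intersection points L₁π,…,L₆π lie on a common conic
contained in π iff D(π,a₁,…,a₄) = det(ν₂(L₁π),…,ν₂(L₆π),ν₂(a₁),…,ν₂(a₄)) = 0
for all a₁,…,a₄ ∈ ℂ⁴. -/
theorem stmt12 (L : Fin 6 → Matrix (Fin 4) (Fin 4) ℂ)
    (hL : ∀ i, (L i)ᵀ = -(L i) ∧ (L i).rank = 2) (π : Fin 4 → ℂ)
    (hLπ : ∀ i, (L i).mulVec π ≠ 0) :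
    MeetsInConic L π ↔
      ∀ a : Fin 4 → Fin 4 → ℂ,
        Matrix.det (Matrix.of fun r c : Fin 10 =>
          Fin.append (fun i : Fin 6 => nu2four ((L i).mulVec π))
            (fun j : Fin 4 => nu2four (a j)) c r) = 0 := by
  set p : Fin 6 → Fin 4 → ℂ := fun i => (L i).mulVec π with hpdef
  have hπ0 : π ≠ 0 := by
    intro h
    exact hLπ 0 (by rw [h, Matrix.mulVec_zero])
  have hplane : ∀ i, π ⬝ᵥ p i = 0 := by
    intro i
    have h1 : π ⬝ᵥ (L i) *ᵥ π = π ᵥ* (L i) ⬝ᵥ π := Matrix.dotProduct_mulVec π (L i) π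
    have h2 : π ᵥ* (L i) = -((L i) *ᵥ π) := by
      rw [← Matrix.mulVec_transpose, (hL i).1, Matrix.neg_mulVec]
    rw [h2, neg_dotProduct, dotProduct_comm] at h1
    have h3 : (2:ℂ) * ((L i) *ᵥ π ⬝ᵥ π) = 0 := by linear_combination h1
    rcases mul_eq_zero.mp h3 with h | h
    · norm_num at h
    · show π ⬝ᵥ (L i) *ᵥ π = 0
      rw [dotProduct_comm]
      exact h
  have hiff := key π hπ0 p hplane
  constructor
  · rintro ⟨Q, hsym, hnv, hvan⟩ a
    rw [det_zero_iff]
    intro happ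
    have hvind : LinearIndependent ℂ (fun i => nu2four (p i)) := by
      have := happ.comp (Fin.castAdd 4) (Fin.castAdd_injective 6 4)
      have heq : ((Fin.append (fun i : Fin 6 => nu2four (p i))
          (fun j : Fin 4 => nu2four (a j))) ∘ (Fin.castAdd 4))
          = fun i : Fin 6 => nu2four (p i) := by
        funext i
        exact Fin.append_left _ _ i
      rwa [heq] at this
    apply hiff.mp ?_ hvind
    push_neg at hnv
    obtain ⟨x₀, hx₀, hQx₀⟩ := hnv
    refine ⟨cQ Q, fun i => by rw [cQ_id]; exact hvan i, x₀, hx₀, ?_⟩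
    rw [cQ_id]
    exact hQx₀
  · intro hdet
    have hnLI : ¬ LinearIndependent ℂ (fun i => nu2four (p i)) := by
      intro hLI
      obtain ⟨a, ha⟩ := exists_append _ hLI
      exact (det_zero_iff _).mp (hdet a) ha
    obtain ⟨c, hcv, x₀, hx₀, hcx⟩ := hiff.mpr hnLI
    refine ⟨Qc c, Qc_symm c, ?_, fun i => by rw [Qc_id]; exact hcv i⟩
    intro hall
    exact hcx (by rw [← Qc_id]; exact hall x₀ hx₀)
end

section
/- The polynomial D(π, a₁,…,a₄) = det(ν₂(L₁π),…,ν₂(L₆π), ν₂(a₁),…,ν₂(a₄)) vanishes whenever the four points a₁,…,a₄ are coplanar (i.e., det(a₁,a₂,a₃,a₄) = 0); hence det(a₁,…,a₄) divides D. -/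
open Matrix MvPolynomial

/-- Variables: the coordinates of the plane π and of the four points a₁,…,a₄. -/
abbrev SLCVVars : Type := (Fin 4) ⊕ (Fin 4 × Fin 4)

/-- The coordinates of π as polynomial variables. -/
noncomputable def piVar : Fin 4 → MvPolynomial SLCVVars ℂ := fun i => X (Sum.inl i)

/-- The coordinates of the point aⱼ as polynomial variables. -/
noncomputable def aVar : Fin 4 → Fin 4 → MvPolynomial SLCVVars ℂ :=
  fun j i => X (Sum.inr (j, i))

/-- The polynomial D(π,a₁,…,a₄) = det(ν₂(L₁π),…,ν₂(L₆π),ν₂(a₁),…,ν₂(a₄)),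
seen as a polynomial in the coordinates of π and of the aⱼ. -/
noncomputable def Dpoly (L : Fin 6 → Matrix (Fin 4) (Fin 4) ℂ) :
    MvPolynomial SLCVVars ℂ :=
  Matrix.det (Matrix.of fun r c : Fin 10 =>
    Fin.append (fun i : Fin 6 => nu2four (((L i).map MvPolynomial.C).mulVec piVar))
      (fun j : Fin 4 => nu2four (aVar j)) c r)




variable {σ : Type*} [DecidableEq σ]

noncomputable def PhiV (v : σ) : MvPolynomial σ ℂ →ₐ[ℂ] Polynomial (MvPolynomial σ ℂ) :=
  aeval (fun u => if u = v then Polynomial.X else Polynomial.C (X u))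

lemma PhiV_X_self (v : σ) : PhiV v (X v) = Polynomial.X := by
  simp [PhiV]

lemma PhiV_X_ne (v : σ) {u : σ} (h : u ≠ v) : PhiV v (X u) = Polynomial.C (X u) := by
  simp [PhiV, h]

lemma eval_PhiV (v : σ) (f : MvPolynomial σ ℂ) :
    Polynomial.eval (X v) (PhiV v f) = f := by
  induction f using MvPolynomial.induction_on with
  | C a => simp [PhiV]
  | add p q hp hq => simp [_root_.map_add, hp, hq]
  | mul_X p u hp =>
      rw [_root_.map_mul, Polynomial.eval_mul, hp]
      by_cases h : u = v
      · subst h; rw [PhiV_X_self]; simp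
      · rw [PhiV_X_ne v h]; simp

lemma PhiV_injective (v : σ) : Function.Injective (PhiV v) := by
  intro a b h
  have := congrArg (Polynomial.eval (X v)) h
  rwa [eval_PhiV, eval_PhiV] at this

lemma PhiV_ne_zero (v : σ) {f : MvPolynomial σ ℂ} (hf : f ≠ 0) : PhiV v f ≠ 0 := by
  intro h; exact hf (PhiV_injective v (by simpa using h))

/-- If `Phi v Q` has `natDegree 0` in a factorization of a "linear in v" polynomial
with prime leading coefficient not dividing the constant coefficient, then `Q` is a unit. -/
lemma isUnit_of_natDegree_eq_zero (v : σ) {f A B P Q : MvPolynomial σ ℂ}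
    (hf : PhiV v f = Polynomial.C A * Polynomial.X + Polynomial.C B)
    (hA : Prime A) (hAB : ¬ A ∣ B) (hPQ : f = P * Q)
    (hd : (PhiV v Q).natDegree = 0) : IsUnit Q := by
  set q₀ : MvPolynomial σ ℂ := (PhiV v Q).coeff 0 with hq₀
  have hQC : PhiV v Q = Polynomial.C q₀ := (Polynomial.eq_C_of_natDegree_eq_zero hd)
  have hQ : Q = q₀ := by
    have := eval_PhiV v Q
    rw [hQC] at this; simpa using this.symm
  have hFP : Polynomial.C A * Polynomial.X + Polynomial.C B = PhiV v P * Polynomial.C q₀ := by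
    rw [← hf, hPQ, _root_.map_mul, hQC]
  have hAq : A = (PhiV v P).coeff 1 * q₀ := by
    have := congrArg (fun p => Polynomial.coeff p 1) hFP
    simpa [Polynomial.coeff_mul_C] using this
  have hBq : B = (PhiV v P).coeff 0 * q₀ := by
    have := congrArg (fun p => Polynomial.coeff p 0) hFP
    simpa [Polynomial.coeff_mul_C] using this
  by_contra hu
  rw [hQ] at hu
  have hirr := hA.irreducible
  rcases hirr.isUnit_or_isUnit hAq with h1 | h1
  · apply hAB
    obtain ⟨u, hu'⟩ := h1
    have hqA : q₀ = ↑u⁻¹ * A := by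
      rw [hAq, ← hu', ← mul_assoc]
      simp
    refine ⟨(PhiV v P).coeff 0 * ↑u⁻¹, ?_⟩
    rw [hBq, hqA]; ring
  · exact hu h1

lemma irreducible_of_linear (v : σ) {f A B : MvPolynomial σ ℂ}
    (hf : PhiV v f = Polynomial.C A * Polynomial.X + Polynomial.C B)
    (hA : Prime A) (hAB : ¬ A ∣ B) : Irreducible f := by
  have hA0 : A ≠ 0 := hA.ne_zero
  have hF1 : (PhiV v f).natDegree = 1 := by
    rw [hf, Polynomial.natDegree_add_C, Polynomial.natDegree_C_mul_X A hA0]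
  have hfne : f ≠ 0 := by
    intro h
    rw [h, _root_.map_zero] at hf
    have := congrArg (fun p => Polynomial.coeff p 1) hf
    simp at this
    exact hA0 this.symm
  constructor
  · intro hUnit
    have := Polynomial.natDegree_eq_zero_of_isUnit (hUnit.map (PhiV v))
    omega
  · intro P Q hPQ
    have hP0 : P ≠ 0 := fun h => hfne (by rw [hPQ, h, zero_mul])
    have hQ0 : Q ≠ 0 := fun h => hfne (by rw [hPQ, h, mul_zero])
    have hsum : (PhiV v P).natDegree + (PhiV v Q).natDegree = 1 := by
      rw [← Polynomial.natDegree_mul (PhiV_ne_zero v hP0) (PhiV_ne_zero v hQ0), ← _root_.map_mul,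
        ← hPQ, hF1]
    rcases Nat.eq_zero_or_pos (PhiV v Q).natDegree with h0 | hpos
    · exact Or.inr (isUnit_of_natDegree_eq_zero v hf hA hAB hPQ h0)
    · have h0 : (PhiV v P).natDegree = 0 := by omega
      exact Or.inl (isUnit_of_natDegree_eq_zero v hf hA hAB (by rw [hPQ, mul_comm]) h0)

noncomputable def KilV (v : σ) : MvPolynomial σ ℂ →ₐ[ℂ] MvPolynomial σ ℂ :=
  aeval (fun u => if u = v then 0 else X u)

lemma X_dvd_sub_KilV (v : σ) (f : MvPolynomial σ ℂ) : X v ∣ f - KilV v f := by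
  induction f using MvPolynomial.induction_on with
  | C a => simp [KilV]
  | add p q hp hq =>
      have : p + q - KilV v (p + q) = (p - KilV v p) + (q - KilV v q) := by
        rw [_root_.map_add]; ring
      rw [this]; exact dvd_add hp hq
  | mul_X p u hp =>
      by_cases h : u = v
      · have hk : KilV v (p * X u) = 0 := by
          rw [_root_.map_mul]; simp [KilV, h]
        rw [hk, sub_zero, h]
        exact Dvd.intro_left p rfl
      · have : p * X u - KilV v (p * X u) = (p - KilV v p) * X u := by
          rw [_root_.map_mul]
          have : KilV v (X u) = X u := by simp [KilV, h]
          rw [this]; ring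
        rw [this]; exact hp.mul_right _

lemma prime_X_mv (v : σ) : Prime (X v : MvPolynomial σ ℂ) := by
  constructor
  · exact X_ne_zero v
  constructor
  · intro hu
    obtain ⟨g, hg⟩ := hu.exists_right_inv
    have := congrArg (KilV v) hg
    simp only [_root_.map_mul, _root_.map_one] at this
    have h0 : KilV v (X v) = 0 := by simp [KilV]
    rw [h0, zero_mul] at this
    exact one_ne_zero this.symm
  · intro a b hab
    have h0 : KilV v (X v) = 0 := by simp [KilV]
    have hdvd0 : ∀ g, X v ∣ g ↔ KilV v g = 0 := by
      intro g
      constructor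
      · rintro ⟨c, rfl⟩; rw [_root_.map_mul, h0, zero_mul]
      · intro hg
        have := X_dvd_sub_KilV v g
        rwa [hg, sub_zero] at this
    rw [hdvd0, _root_.map_mul] at hab
    rcases mul_eq_zero.mp hab with h | h
    · exact Or.inl ((hdvd0 a).mpr h)
    · exact Or.inr ((hdvd0 b).mpr h)

noncomputable def xv (i j : Fin 4) : MvPolynomial SLCVVars ℂ := X (Sum.inr (j, i))

noncomputable def A2 : MvPolynomial SLCVVars ℂ := xv 2 2 * xv 3 3 - xv 2 3 * xv 3 2
noncomputable def B2 : MvPolynomial SLCVVars ℂ := -(xv 2 3 * xv 3 2)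
noncomputable def A3 : MvPolynomial SLCVVars ℂ :=
  xv 1 1 * (xv 2 2 * xv 3 3 - xv 2 3 * xv 3 2)
  - xv 1 2 * (xv 2 1 * xv 3 3 - xv 2 3 * xv 3 1)
  + xv 1 3 * (xv 2 1 * xv 3 2 - xv 2 2 * xv 3 1)
noncomputable def B3 : MvPolynomial SLCVVars ℂ :=
  - xv 1 2 * (xv 2 1 * xv 3 3 - xv 2 3 * xv 3 1)
  + xv 1 3 * (xv 2 1 * xv 3 2 - xv 2 2 * xv 3 1)
noncomputable def M01 : MvPolynomial SLCVVars ℂ :=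
  xv 1 0 * (xv 2 2 * xv 3 3 - xv 2 3 * xv 3 2)
  - xv 1 2 * (xv 2 0 * xv 3 3 - xv 2 3 * xv 3 0)
  + xv 1 3 * (xv 2 0 * xv 3 2 - xv 2 2 * xv 3 0)
noncomputable def M02 : MvPolynomial SLCVVars ℂ :=
  xv 1 0 * (xv 2 1 * xv 3 3 - xv 2 3 * xv 3 1)
  - xv 1 1 * (xv 2 0 * xv 3 3 - xv 2 3 * xv 3 0)
  + xv 1 3 * (xv 2 0 * xv 3 1 - xv 2 1 * xv 3 0)
noncomputable def M03 : MvPolynomial SLCVVars ℂ :=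
  xv 1 0 * (xv 2 1 * xv 3 2 - xv 2 2 * xv 3 1)
  - xv 1 1 * (xv 2 0 * xv 3 2 - xv 2 2 * xv 3 0)
  + xv 1 2 * (xv 2 0 * xv 3 1 - xv 2 1 * xv 3 0)
noncomputable def B4 : MvPolynomial SLCVVars ℂ :=
  - (xv 0 1 * M01) + xv 0 2 * M02 - xv 0 3 * M03

lemma detExp :
    Matrix.det (Matrix.of fun i j : Fin 4 => aVar j i) = xv 0 0 * A3 + B4 := by
  simp [Matrix.det_succ_row_zero, Fin.sum_univ_succ, aVar, A3, B4, M01, M02, M03, xv, show (Fin.succ (0 : Fin 3) : Fin 4) = 1 by decide, show (Fin.castSucc (0 : Fin 3) : Fin 4) = 0 by decide, show (Fin.succ (1 : Fin 3) : Fin 4) = 2 by decide, show (Fin.castSucc (1 : Fin 3) : Fin 4) = 1 by decide, show (Fin.succ (2 : Fin 3) : Fin 4) = 3 by decide, show (Fin.castSucc (2 : Fin 3) : Fin 4) = 2 by decide, show Fin.succAbove (0 : Fin 4) (0 : Fin 3) = 1 by decide, show Fin.succAbove (0 : Fin 4) (1 : Fin 3) = 2 by decide, show Fin.succAbove (0 :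 Fin 4) (2 : Fin 3) = 3 by decide, show Fin.succAbove (1 : Fin 4) (0 : Fin 3) = 0 by decide, show Fin.succAbove (1 : Fin 4) (1 : Fin 3) = 2 by decide, show Fin.succAbove (1 : Fin 4) (2 : Fin 3) = 3 by decide, show Fin.succAbove (2 : Fin 4) (0 : Fin 3) = 0 by decide, show Fin.succAbove (2 : Fin 4) (1 : Fin 3) = 1 by decide, show Fin.succAbove (2 : Fin 4) (2 : Fin 3) = 3 by decide, show Fin.succAbove (3 : Fin 4) (0 : Fin 3) = 0 by decide, show Fin.succAbove (3 : Fin 4) (1 : Fin 3) = 1 by decide, show Fin.succAbove (3 : Fin 4) (2 : Fin 3) = 2 by decide]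
  ring

noncomputable def ptof (g : Fin 4 × Fin 4 → ℂ) : SLCVVars → ℂ := Sum.elim 0 g

lemma prime2 : Prime A2 := by
  have hf2 : PhiV (Sum.inr (2,2) : SLCVVars) A2
      = Polynomial.C (xv 3 3) * Polynomial.X + Polynomial.C B2 := by
    simp [A2, B2, xv, PhiV]; ring
  have hA1 : Prime (xv 3 3) := prime_X_mv _
  have hAB : ¬ xv 3 3 ∣ B2 := by
    intro h
    have := map_dvd (eval (ptof (fun p => if p = (3,2) ∨ p = (2,3) then 1 else 0))) h
    simp [xv, B2, ptof] at this
  exact UniqueFactorizationMonoid.irreducible_iff_prime.mp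
    (irreducible_of_linear _ hf2 hA1 hAB)

lemma prime3 : Prime A3 := by
  have hf3 : PhiV (Sum.inr (1,1) : SLCVVars) A3
      = Polynomial.C A2 * Polynomial.X + Polynomial.C B3 := by
    simp [A3, A2, B3, xv, PhiV]; ring
  have hAB : ¬ A2 ∣ B3 := by
    intro h
    have := map_dvd (eval (ptof (fun p => if p = (3,1) ∨ p = (1,2) ∨ p = (2,3) then 1 else 0))) h
    simp [xv, A2, B3, ptof] at this
  exact UniqueFactorizationMonoid.irreducible_iff_prime.mp
    (irreducible_of_linear _ hf3 prime2 hAB)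

lemma primeDet : Prime (Matrix.det (Matrix.of fun i j : Fin 4 => aVar j i)) := by
  have hf4 : PhiV (Sum.inr (0,0) : SLCVVars) (Matrix.det (Matrix.of fun i j : Fin 4 => aVar j i))
      = Polynomial.C A3 * Polynomial.X + Polynomial.C B4 := by
    rw [detExp]
    simp [A3, A2, B4, M01, M02, M03, xv, PhiV]; ring
  have hAB : ¬ A3 ∣ B4 := by
    intro h
    have := map_dvd (eval (ptof (fun p => if p = (3,0) ∨ p = (0,1) ∨ p = (1,2) ∨ p = (2,3) then 1 else 0))) h
    simp [xv, A3, B4, M01, M02, M03, ptof] at this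
  exact UniqueFactorizationMonoid.irreducible_iff_prime.mp
    (irreducible_of_linear _ hf4 prime3 hAB)


section Vanishing

lemma nu2four_apply_hom (φ : MvPolynomial SLCVVars ℂ →+* ℂ) (v : Fin 4 → MvPolynomial SLCVVars ℂ)
    (r : Fin 10) : φ (nu2four v r) = nu2four (fun k => φ (v k)) r := by
  fin_cases r <;> norm_num [nu2four]

lemma nu2four_zero (r : Fin 10) : nu2four (0 : Fin 4 → ℂ) r = 0 := by
  fin_cases r <;> norm_num [nu2four]

lemma eval_Dpoly (L : Fin 6 → Matrix (Fin 4) (Fin 4) ℂ) (π : Fin 4 → ℂ) (a : Fin 4 → Fin 4 → ℂ) :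
    MvPolynomial.eval (Sum.elim π fun p => a p.1 p.2) (Dpoly L) =
      Matrix.det (Matrix.of fun r c : Fin 10 =>
        Fin.append (fun i : Fin 6 => nu2four ((L i).mulVec π))
          (fun j : Fin 4 => nu2four (a j)) c r) := by
  rw [Dpoly, RingHom.map_det]
  congr 1
  ext r c
  simp only [RingHom.mapMatrix_apply, Matrix.map_apply, Matrix.of_apply]
  refine Fin.addCases (m := 6) (n := 4) ?_ ?_ c
  · intro i
    rw [Fin.append_left, Fin.append_left, nu2four_apply_hom]
    congr 1
    funext k
    simp [Matrix.mulVec, dotProduct, piVar, Matrix.map_apply]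
  · intro j
    rw [Fin.append_right, Fin.append_right, nu2four_apply_hom]
    congr 1
    funext k
    simp [aVar]

def wvec (l m : Fin 4 → ℂ) : Fin 10 → ℂ :=
  ![l 0 * m 0, l 0 * m 1 + l 1 * m 0, l 0 * m 2 + l 2 * m 0, l 0 * m 3 + l 3 * m 0,
    l 1 * m 1, l 1 * m 2 + l 2 * m 1, l 1 * m 3 + l 3 * m 1, l 2 * m 2,
    l 2 * m 3 + l 3 * m 2, l 3 * m 3]

lemma wvec_key (l m x : Fin 4 → ℂ) :
    ∑ r : Fin 10, wvec l m r * nu2four x r = (∑ i, l i * x i) * (∑ i, m i * x i) := by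
  simp [wvec, nu2four, Fin.sum_univ_succ, show Fin.succ (2 : Fin 3) = (3 : Fin 4) by decide]
  ring

lemma vanishing_aux (L : Fin 6 → Matrix (Fin 4) (Fin 4) ℂ)
    (hL : ∀ i, (L i)ᵀ = -(L i))
    (π : Fin 4 → ℂ) (a : Fin 4 → Fin 4 → ℂ)
    (hdet : Matrix.det (Matrix.of fun i j : Fin 4 => a j i) = 0) :
    MvPolynomial.eval (Sum.elim π fun p => a p.1 p.2) (Dpoly L) = 0 := by
  rw [eval_Dpoly]
  obtain ⟨l, hl0, hlv⟩ := Matrix.exists_vecMul_eq_zero_iff.mpr hdet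
  have hla : ∀ j : Fin 4, ∑ i, l i * a j i = 0 := by
    intro j
    have := congrFun hlv j
    simpa [Matrix.vecMul, dotProduct] using this
  by_cases hπ : π = 0
  · apply Matrix.det_eq_zero_of_column_eq_zero (Fin.castAdd 4 (0 : Fin 6))
    intro r
    rw [Matrix.of_apply, Fin.append_left, hπ]
    simp [nu2four_zero]
  · obtain ⟨i₀, hi₀⟩ := Function.ne_iff.mp hπ
    obtain ⟨j₀, hj₀⟩ := Function.ne_iff.mp hl0
    simp only [Pi.zero_apply] at hi₀ hj₀
    set w := wvec l π with hw_def
    have hw : w ≠ 0 := by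
      intro hw0
      have hall : ∀ x : Fin 4 → ℂ, (∑ i, l i * x i) * (∑ i, π i * x i) = 0 := by
        intro x
        rw [← wvec_key, ← hw_def, hw0]
        simp
      have hsum : ∀ (u : Fin 4 → ℂ) (k : Fin 4),
          (∑ i, u i * (fun i' => if i' = k then (1:ℂ) else 0) i) = u k := by
        intro u k
        simp
      have h1 := hall (fun i' => if i' = j₀ then (1:ℂ) else 0)
      rw [hsum, hsum] at h1
      have hπj₀ : π j₀ = 0 := by
        rcases mul_eq_zero.mp h1 with h | h
        · exact absurd h hj₀
        · exact h
      have h2 := hall (fun i' => if i' = i₀ then (1:ℂ) else 0)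
      rw [hsum, hsum] at h2
      have hli₀ : l i₀ = 0 := by
        rcases mul_eq_zero.mp h2 with h | h
        · exact h
        · exact absurd h hi₀
      have h3 := hall (fun i' => (if i' = j₀ then (1:ℂ) else 0) + (if i' = i₀ then (1:ℂ) else 0))
      have hexp : ∀ u : Fin 4 → ℂ,
          (∑ i, u i * ((if i = j₀ then (1:ℂ) else 0) + (if i = i₀ then (1:ℂ) else 0)))
            = u j₀ + u i₀ := by
        intro u
        have : ∀ i, u i * ((if i = j₀ then (1:ℂ) else 0) + (if i = i₀ then (1:ℂ) else 0))
            = u i * (if i = j₀ then (1:ℂ) else 0) + u i * (if i = i₀ then (1:ℂ) else 0) := by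
          intro i; ring
        simp only [this, Finset.sum_add_distrib]
        rw [hsum, hsum]
      rw [hexp, hexp, hli₀, hπj₀, add_zero, zero_add] at h3
      rcases mul_eq_zero.mp h3 with h | h
      · exact hj₀ h
      · exact hi₀ h
    rw [← Matrix.exists_vecMul_eq_zero_iff]
    refine ⟨w, hw, ?_⟩
    funext c
    have hc : (w ᵥ* (Matrix.of fun r c : Fin 10 =>
        Fin.append (fun i : Fin 6 => nu2four ((L i).mulVec π))
          (fun j : Fin 4 => nu2four (a j)) c r)) c
        = ∑ r : Fin 10, w r * (Fin.append (fun i : Fin 6 => nu2four ((L i).mulVec π))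
          (fun j : Fin 4 => nu2four (a j)) c r) := by
      simp [Matrix.vecMul, dotProduct]
    rw [Pi.zero_apply, hc]
    refine Fin.addCases (m := 6) (n := 4) ?_ ?_ c
    · intro i
      simp only [Fin.append_left]
      rw [hw_def, wvec_key]
      have hanti : (∑ k, π k * ((L i) *ᵥ π) k) = 0 := by
        have h1 : π ⬝ᵥ ((L i) *ᵥ π) = - (π ⬝ᵥ ((L i) *ᵥ π)) := by
          conv_lhs => rw [dotProduct_mulVec, ← Matrix.mulVec_transpose, hL i,
            Matrix.neg_mulVec, neg_dotProduct, dotProduct_comm]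
        have h2 : π ⬝ᵥ ((L i) *ᵥ π) = 0 := by
          have := add_eq_zero_iff_eq_neg.mpr h1
          rw [← two_mul] at this
          simpa using this
        simpa [dotProduct] using h2
      rw [hanti, mul_zero]
    · intro j
      simp only [Fin.append_right]
      rw [hw_def, wvec_key, hla j, zero_mul]

end Vanishing


/-- D vanishes whenever the four points a₁,…,a₄ are coplanar; hence
det(a₁,…,a₄) divides D. -/
theorem stmt15 (L : Fin 6 → Matrix (Fin 4) (Fin 4) ℂ)
    (hL : ∀ i, (L i)ᵀ = -(L i) ∧ (L i).rank = 2) :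
    (∀ (π : Fin 4 → ℂ) (a : Fin 4 → Fin 4 → ℂ),
        Matrix.det (Matrix.of fun i j : Fin 4 => a j i) = 0 →
        MvPolynomial.eval (Sum.elim π fun p => a p.1 p.2) (Dpoly L) = 0) ∧
      Matrix.det (Matrix.of fun i j : Fin 4 => aVar j i) ∣ Dpoly L := by
  have hv : ∀ (π : Fin 4 → ℂ) (a : Fin 4 → Fin 4 → ℂ),
      Matrix.det (Matrix.of fun i j : Fin 4 => a j i) = 0 →
      MvPolynomial.eval (Sum.elim π fun p => a p.1 p.2) (Dpoly L) = 0 :=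
    fun π a hdet => vanishing_aux L (fun i => (hL i).1) π a hdet
  refine ⟨hv, ?_⟩
  set Δ : MvPolynomial SLCVVars ℂ := Matrix.det (Matrix.of fun i j : Fin 4 => aVar j i) with hΔdef
  have hprime : Prime Δ := primeDet
  have hmem : Dpoly L ∈ Ideal.span {Δ} := by
    have h1 : Dpoly L ∈ vanishingIdeal ℂ (zeroLocus ℂ (Ideal.span {Δ})) := by
      rw [mem_vanishingIdeal_iff]
      intro x hx
      have hΔ0 : MvPolynomial.eval x Δ = 0 := hx Δ (Ideal.subset_span rfl)
      set π : Fin 4 → ℂ := fun i => x (Sum.inl i) with hπdef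
      set a : Fin 4 → Fin 4 → ℂ := fun j i => x (Sum.inr (j, i)) with hadef
      have hxe : (Sum.elim π fun p => a p.1 p.2) = x := by
        funext s
        cases s with
        | inl i => rfl
        | inr p => cases p; rfl
      have hdet : Matrix.det (Matrix.of fun i j : Fin 4 => a j i) = 0 := by
        rw [← hΔ0, hΔdef, RingHom.map_det]
        congr 1
        ext i j
        simp [RingHom.mapMatrix_apply, Matrix.map_apply, aVar, hadef]
      rw [← hxe]
      exact hv π a hdet
    rw [vanishingIdeal_zeroLocus_eq_radical] at h1
    have hP : (Ideal.span {Δ}).IsPrime :=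
      (Ideal.span_singleton_prime hprime.ne_zero).mpr hprime
    rwa [hP.radical] at h1
  exact Ideal.mem_span_singleton.mp hmem
end
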